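/- Let f : ℝ → ℝ be given by f(y) = q_α(y − u) − q_α(y) for fixed u ∈ ℝ, where q_α(x) = (a·1{x≥0} + b·1{x<0})|x|^α with α ∈ (-1/2, 0). Then f ∈ L²(ℝ) even though q_α itself is unbounded near its singularity; in particular ∫_ℝ f(y)² dy = |u|^{2α+1} Γ_α² < ∞. -/

import Mathlib

open Real MeasureTheory Set

noncomputable def qCusp (a b α : ℝ) (x : ℝ) : ℝ :=
  (if 0 ≤ x then a else b) * |x| ^ α

lemma qCusp_measurable (a b α : ℝ) : Measurable (qCusp a b α) := by
  unfold qCusp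
  apply Measurable.mul
  · exact Measurable.ite (measurableSet_le measurable_const measurable_id) measurable_const
      measurable_const
  · fun_prop

lemma qCusp_mul (a b α : ℝ) {c : ℝ} (hc : 0 < c) (x : ℝ) :
    qCusp a b α (c * x) = c ^ α * qCusp a b α x := by
  unfold qCusp
  simp only [mul_nonneg_iff_of_pos_left hc, abs_mul, abs_of_pos hc,
    Real.mul_rpow hc.le (abs_nonneg x)]
  ring

lemma rpow_diff_le {α : ℝ} (hα2 : α < 0) {s t : ℝ} (hs : 0 < s) (hst : s ≤ t) :
    s ^ α - t ^ α ≤ -α * s ^ (α - 1) * (t - s) := by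
  have key : ‖t ^ α - s ^ α‖ ≤ -α * s ^ (α - 1) * ‖t - s‖ := by
    apply Convex.norm_image_sub_le_of_norm_hasDerivWithin_le
      (f := fun x : ℝ => x ^ α) (f' := fun x => α * x ^ (α - 1)) (s := Set.Ici s)
      ?_ ?_ (convex_Ici s) (Set.mem_Ici.mpr le_rfl) (Set.mem_Ici.mpr hst) <;> try skip
    · intro x hx
      exact (Real.hasDerivAt_rpow_const
        (Or.inl (ne_of_gt (lt_of_lt_of_le hs hx)))).hasDerivWithinAt
    · intro x hx
      have hx0 : 0 < x := lt_of_lt_of_le hs hx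
      have h1 : ‖α * x ^ (α - 1)‖ = -α * x ^ (α - 1) := by
        rw [Real.norm_eq_abs, abs_mul, abs_of_neg hα2,
          abs_of_pos (Real.rpow_pos_of_pos hx0 _)]
      rw [h1]
      have h2 : x ^ (α - 1) ≤ s ^ (α - 1) :=
        Real.rpow_le_rpow_of_nonpos hs hx (by linarith)
      exact mul_le_mul_of_nonneg_left h2 (by linarith)
  have h3 : s ^ α - t ^ α ≤ ‖t ^ α - s ^ α‖ := by
    rw [Real.norm_eq_abs, abs_sub_comm]; exact le_abs_self _
  have h4 : ‖t - s‖ = t - s := by rw [Real.norm_eq_abs, abs_of_nonneg (by linarith)]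
  calc s ^ α - t ^ α ≤ -α * s ^ (α - 1) * ‖t - s‖ := h3.trans key
    _ = -α * s ^ (α - 1) * (t - s) := by rw [h4]

lemma sq_rpow {y α : ℝ} (hy : 0 ≤ y) : (y ^ α) ^ 2 = y ^ (2 * α) := by
  rw [← Real.rpow_natCast (y ^ α) 2, ← Real.rpow_mul hy]
  norm_num [mul_comm]

lemma qCusp_sq_le (a b α : ℝ) (y : ℝ) :
    (qCusp a b α y) ^ 2 ≤ (|a| + |b|) ^ 2 * |y| ^ (2 * α) := by
  unfold qCusp
  rw [← sq_rpow (abs_nonneg y), mul_pow]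
  have h1 : (if 0 ≤ y then a else b) ^ 2 ≤ (|a| + |b|) ^ 2 := by
    split <;> nlinarith [abs_nonneg a, abs_nonneg b, sq_abs a, sq_abs b,
      mul_nonneg (abs_nonneg a) (abs_nonneg b)]
  exact mul_le_mul_of_nonneg_right h1 (sq_nonneg _)

lemma abs_rpow_intervalIntegrable {α : ℝ} (hα : -1 < 2 * α) (c d : ℝ) :
    IntervalIntegrable (fun x : ℝ => |x| ^ (2 * α)) volume c d := by
  have h0 : ∀ e : ℝ, 0 ≤ e → IntervalIntegrable (fun x : ℝ => |x| ^ (2 * α)) volume 0 e := by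
    intro e he
    rw [intervalIntegrable_iff_integrableOn_Ioc_of_le he]
    refine (((intervalIntegrable_iff_integrableOn_Ioc_of_le he).mp
      (intervalIntegral.intervalIntegrable_rpow' hα))).congr_fun ?_ measurableSet_Ioc
    intro x hx
    simp only [abs_of_pos hx.1]
  have hto : ∀ e : ℝ, IntervalIntegrable (fun x : ℝ => |x| ^ (2 * α)) volume 0 e := by
    intro e
    rcases le_or_gt 0 e with he | he
    · exact h0 e he
    · have := ((IntervalIntegrable.iff_comp_neg (f := fun x : ℝ => |x| ^ (2 * α)) (a := 0) (b := -e)).mp (h0 (-e) (by linarith)))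
      simp only [abs_neg, neg_zero, neg_neg] at this
      exact this
  exact (hto c).symm.trans (hto d)

lemma tail_indicator_int {α : ℝ} (hα1 : -(1/2) < α) (hα2 : α < 0) :
    IntegrableOn (fun x : ℝ => (x - 1) ^ (2 * α - 2)) (Ioi (2:ℝ)) := by
  have h1 : IntegrableOn (fun t : ℝ => t ^ (2 * α - 2)) (Ioi (1:ℝ)) :=
    integrableOn_Ioi_rpow_of_lt (by linarith) one_pos
  have h2 : Integrable ((Ioi (1:ℝ)).indicator fun t : ℝ => t ^ (2 * α - 2)) :=
    (integrable_indicator_iff measurableSet_Ioi).mpr h1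
  have h3 : Integrable fun x : ℝ => ((Ioi (1:ℝ)).indicator fun t : ℝ => t ^ (2 * α - 2)) (x - 1) :=
    h2.comp_sub_right 1
  have h4 : (fun x : ℝ => ((Ioi (1:ℝ)).indicator fun t : ℝ => t ^ (2 * α - 2)) (x - 1))
      = (Ioi (2:ℝ)).indicator fun x : ℝ => (x - 1) ^ (2 * α - 2) := by
    funext x
    by_cases hx : x ∈ Ioi (2:ℝ)
    · rw [Set.indicator_of_mem hx, Set.indicator_of_mem]
      simp only [mem_Ioi] at hx ⊢; linarith
    · rw [Set.indicator_of_notMem hx, Set.indicator_of_notMem]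
      simp only [mem_Ioi] at hx ⊢; linarith
  rw [h4] at h3
  exact (integrable_indicator_iff measurableSet_Ioi).mp h3

lemma tail_indicator_int_neg {α : ℝ} (hα1 : -(1/2) < α) (hα2 : α < 0) :
    IntegrableOn (fun x : ℝ => (-x) ^ (2 * α - 2)) (Iio (-1:ℝ)) := by
  have h1 : IntegrableOn (fun t : ℝ => t ^ (2 * α - 2)) (Ioi (1:ℝ)) :=
    integrableOn_Ioi_rpow_of_lt (by linarith) one_pos
  have h2 : Integrable ((Ioi (1:ℝ)).indicator fun t : ℝ => t ^ (2 * α - 2)) :=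
    (integrable_indicator_iff measurableSet_Ioi).mpr h1
  have h3 : Integrable fun x : ℝ => ((Ioi (1:ℝ)).indicator fun t : ℝ => t ^ (2 * α - 2)) (-1 * x) :=
    h2.comp_mul_left' (by norm_num)
  have h4 : (fun x : ℝ => ((Ioi (1:ℝ)).indicator fun t : ℝ => t ^ (2 * α - 2)) (-1 * x))
      = (Iio (-1:ℝ)).indicator fun x : ℝ => (-x) ^ (2 * α - 2) := by
    funext x
    by_cases hx : x ∈ Iio (-1:ℝ)
    · rw [Set.indicator_of_mem hx, Set.indicator_of_mem]
      · norm_num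
      · simp only [mem_Iio] at hx; simp only [mem_Ioi]; linarith
    · rw [Set.indicator_of_notMem hx, Set.indicator_of_notMem]
      simp only [mem_Iio, not_lt] at hx; simp only [mem_Ioi, not_lt]; linarith
  rw [h4] at h3
  exact (integrable_indicator_iff measurableSet_Iio).mp h3

lemma core_integrable (a b α : ℝ) (hα1 : -(1/2) < α) (hα2 : α < 0) :
    Integrable (fun x : ℝ => (qCusp a b α (x - 1) - qCusp a b α x) ^ 2) := by
  set F : ℝ → ℝ := fun x => (qCusp a b α (x - 1) - qCusp a b α x) ^ 2 with hF
  have h2α : -1 < 2 * α := by linarith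
  have Fmeas : Measurable F := by
    apply Measurable.pow_const
    exact ((qCusp_measurable a b α).comp (measurable_id.sub_const 1)).sub
      (qCusp_measurable a b α)
  have Fnn : ∀ x, ‖F x‖ = F x := fun x => by
    rw [Real.norm_eq_abs, abs_of_nonneg (sq_nonneg _)]
  -- middle part
  have hmid : IntegrableOn F (Icc (-1:ℝ) 2) := by
    have g1 : IntegrableOn (fun x : ℝ => |x| ^ (2 * α)) (Icc (-1:ℝ) 2) := by
      rw [integrableOn_Icc_iff_integrableOn_Ioc]
      exact (intervalIntegrable_iff_integrableOn_Ioc_of_le (by norm_num)).mp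
        (abs_rpow_intervalIntegrable h2α (-1) 2)
    have g2 : IntegrableOn (fun x : ℝ => |x - 1| ^ (2 * α)) (Icc (-1:ℝ) 2) := by
      rw [integrableOn_Icc_iff_integrableOn_Ioc]
      have := (abs_rpow_intervalIntegrable h2α (-2) 1).comp_sub_right 1
      norm_num at this
      exact (intervalIntegrable_iff_integrableOn_Ioc_of_le (by norm_num)).mp this
    have gint : IntegrableOn
        (fun x : ℝ => 2 * (|a| + |b|) ^ 2 * |x - 1| ^ (2 * α)
          + 2 * (|a| + |b|) ^ 2 * |x| ^ (2 * α)) (Icc (-1:ℝ) 2) :=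
      (g2.const_mul _).add (g1.const_mul _)
    apply Integrable.mono' gint (Fmeas.aestronglyMeasurable.restrict)
    apply ae_of_all
    intro x
    rw [Fnn x]
    have b1 := qCusp_sq_le a b α (x - 1)
    have b2 := qCusp_sq_le a b α x
    have : F x ≤ 2 * (qCusp a b α (x-1))^2 + 2 * (qCusp a b α x)^2 := by
      simp only [hF]; nlinarith [sq_nonneg (qCusp a b α (x-1) + qCusp a b α x)]
    nlinarith
  -- right tail
  have hright : IntegrableOn F (Ioi (2:ℝ)) := by
    have gint : IntegrableOn (fun x : ℝ => a ^ 2 * α ^ 2 * (x - 1) ^ (2 * α - 2))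
        (Ioi (2:ℝ)) := (tail_indicator_int hα1 hα2).const_mul _
    apply Integrable.mono' gint (Fmeas.aestronglyMeasurable.restrict)
    rw [ae_restrict_iff' measurableSet_Ioi]
    apply ae_of_all
    intro x hx
    simp only [mem_Ioi] at hx
    rw [Fnn x]
    have hs : (0:ℝ) < x - 1 := by linarith
    have ht : (0:ℝ) < x := by linarith
    have e1 : qCusp a b α (x - 1) = a * (x - 1) ^ α := by
      unfold qCusp; rw [if_pos hs.le, abs_of_pos hs]
    have e2 : qCusp a b α x = a * x ^ α := by
      unfold qCusp; rw [if_pos ht.le, abs_of_pos ht]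
    have h5 : x ^ α ≤ (x - 1) ^ α :=
      Real.rpow_le_rpow_of_nonpos hs (by linarith) hα2.le
    have h6 : (x - 1) ^ α - x ^ α ≤ -α * (x - 1) ^ (α - 1) * (x - (x - 1)) :=
      rpow_diff_le hα2 hs (by linarith)
    have h7 : ((x - 1) ^ (α - 1)) ^ 2 = (x - 1) ^ (2 * α - 2) := by
      rw [sq_rpow hs.le, show 2 * (α - 1) = 2 * α - 2 by ring]
    have h8 : ((x - 1) ^ α - x ^ α) ^ 2 ≤ (-α * (x - 1) ^ (α - 1)) ^ 2 := by
      apply pow_le_pow_left₀ (by linarith)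
      calc (x - 1) ^ α - x ^ α ≤ -α * (x - 1) ^ (α - 1) * (x - (x - 1)) := h6
        _ = -α * (x - 1) ^ (α - 1) := by ring_nf
    simp only [hF, e1, e2]
    calc (a * (x - 1) ^ α - a * x ^ α) ^ 2
        = a ^ 2 * ((x - 1) ^ α - x ^ α) ^ 2 := by ring
      _ ≤ a ^ 2 * (-α * (x - 1) ^ (α - 1)) ^ 2 :=
          mul_le_mul_of_nonneg_left h8 (sq_nonneg a)
      _ = a ^ 2 * α ^ 2 * ((x - 1) ^ (α - 1)) ^ 2 := by ring
      _ = a ^ 2 * α ^ 2 * (x - 1) ^ (2 * α - 2) := by rw [h7]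
  -- left tail
  have hleft : IntegrableOn F (Iio (-1:ℝ)) := by
    have gint : IntegrableOn (fun x : ℝ => b ^ 2 * α ^ 2 * (-x) ^ (2 * α - 2))
        (Iio (-1:ℝ)) := (tail_indicator_int_neg hα1 hα2).const_mul _
    apply Integrable.mono' gint (Fmeas.aestronglyMeasurable.restrict)
    rw [ae_restrict_iff' measurableSet_Iio]
    apply ae_of_all
    intro x hx
    simp only [mem_Iio] at hx
    rw [Fnn x]
    have hs : (0:ℝ) < -x := by linarith
    have e1 : qCusp a b α (x - 1) = b * (1 - x) ^ α := by
      unfold qCusp; rw [if_neg (by linarith), abs_of_neg (by linarith : x - 1 < 0), neg_sub]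
    have e2 : qCusp a b α x = b * (-x) ^ α := by
      unfold qCusp; rw [if_neg (by linarith), abs_of_neg (by linarith : x < 0)]
    have h5 : (1 - x) ^ α ≤ (-x) ^ α :=
      Real.rpow_le_rpow_of_nonpos hs (by linarith) hα2.le
    have h6 : (-x) ^ α - (1 - x) ^ α ≤ -α * (-x) ^ (α - 1) * ((1 - x) - (-x)) :=
      rpow_diff_le hα2 hs (by linarith)
    have h7 : ((-x) ^ (α - 1)) ^ 2 = (-x) ^ (2 * α - 2) := by
      rw [sq_rpow hs.le, show 2 * (α - 1) = 2 * α - 2 by ring]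
    have h8 : ((-x) ^ α - (1 - x) ^ α) ^ 2 ≤ (-α * (-x) ^ (α - 1)) ^ 2 := by
      apply pow_le_pow_left₀ (by linarith)
      calc (-x) ^ α - (1 - x) ^ α ≤ -α * (-x) ^ (α - 1) * ((1 - x) - (-x)) := h6
        _ = -α * (-x) ^ (α - 1) := by ring_nf
    simp only [hF, e1, e2]
    calc (b * (1 - x) ^ α - b * (-x) ^ α) ^ 2
        = b ^ 2 * ((-x) ^ α - (1 - x) ^ α) ^ 2 := by ring
      _ ≤ b ^ 2 * (-α * (-x) ^ (α - 1)) ^ 2 :=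
          mul_le_mul_of_nonneg_left h8 (sq_nonneg b)
      _ = b ^ 2 * α ^ 2 * ((-x) ^ (α - 1)) ^ 2 := by ring
      _ = b ^ 2 * α ^ 2 * (-x) ^ (2 * α - 2) := by rw [h7]
  -- assemble
  rw [← integrableOn_univ]
  apply IntegrableOn.mono_set (hleft.union (hmid.union hright))
  intro x _
  rcases lt_or_ge x (-1) with h | h
  · exact Or.inl h
  · rcases le_or_gt x 2 with h2 | h2
    · exact Or.inr (Or.inl ⟨h, h2⟩)
    · exact Or.inr (Or.inr h2)

lemma scale_eq (a b α : ℝ) {u : ℝ} (hu : 0 < u) :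
    (fun y : ℝ => (qCusp a b α (y - u) - qCusp a b α y) ^ 2)
      = fun y : ℝ => u ^ (2 * α) *
          ((qCusp a b α (u⁻¹ * y - 1) - qCusp a b α (u⁻¹ * y)) ^ 2) := by
  funext y
  have h1 : qCusp a b α (y - u) = u ^ α * qCusp a b α (u⁻¹ * y - 1) := by
    rw [← qCusp_mul a b α hu]
    congr 1
    field_simp
  have h2 : qCusp a b α y = u ^ α * qCusp a b α (u⁻¹ * y) := by
    rw [← qCusp_mul a b α hu]
    congr 1
    field_simp
  rw [h1, h2, ← mul_sub, mul_pow, sq_rpow hu.le]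

lemma pos_case (a b α : ℝ) (hα1 : -(1/2) < α) (hα2 : α < 0) {u : ℝ} (hu : 0 < u) :
    Integrable (fun y : ℝ => (qCusp a b α (y - u) - qCusp a b α y) ^ 2) ∧
    ∫ y : ℝ, (qCusp a b α (y - u) - qCusp a b α y) ^ 2
      = u ^ (2 * α + 1) * ∫ x : ℝ, (qCusp a b α (x - 1) - qCusp a b α x) ^ 2 := by
  have hcore := core_integrable a b α hα1 hα2
  set G : ℝ → ℝ := fun x => (qCusp a b α (x - 1) - qCusp a b α x) ^ 2 with hG
  have hcomp : Integrable (fun y : ℝ => G (u⁻¹ * y)) :=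
    hcore.comp_mul_left' (inv_ne_zero hu.ne')
  constructor
  · rw [scale_eq a b α hu]
    exact hcomp.const_mul _
  · rw [scale_eq a b α hu]
    rw [MeasureTheory.integral_const_mul]
    have := Measure.integral_comp_mul_left G u⁻¹
    rw [this, smul_eq_mul, inv_inv, abs_of_pos hu,
      Real.rpow_add hu, Real.rpow_one]
    ring

theorem cusp_kernel_L2_neg_alpha (a b α : ℝ) (ha : 0 ≤ a) (hb : 0 ≤ b)
    (hab : ¬ (a = 0 ∧ b = 0)) (hα : α ∈ Set.Ioo (-(1/2) : ℝ) 0) (u : ℝ) :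
    Integrable (fun y : ℝ => (qCusp a b α (y - u) - qCusp a b α y) ^ 2) ∧
    ∫ y : ℝ, (qCusp a b α (y - u) - qCusp a b α y) ^ 2
      = |u| ^ (2 * α + 1) * ∫ x : ℝ, (qCusp a b α (x - 1) - qCusp a b α x) ^ 2 := by
  obtain ⟨hα1, hα2⟩ := hα
  rcases lt_trichotomy u 0 with hu | hu | hu
  · -- negative u : reduce to -u via translation
    have hpos := pos_case a b α hα1 hα2 (u := -u) (by linarith)
    have hswap : (fun y : ℝ => (qCusp a b α (y - u) - qCusp a b α y) ^ 2)
        = fun y : ℝ =>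
            (fun z : ℝ => (qCusp a b α (z - (-u)) - qCusp a b α z) ^ 2) (y - u) := by
      funext y
      simp only [sub_neg_eq_add, sub_add_cancel]
      ring
    constructor
    · rw [hswap]
      exact hpos.1.comp_sub_right u
    · rw [hswap]
      rw [integral_sub_right_eq_self (μ := volume)
        (fun z : ℝ => (qCusp a b α (z - (-u)) - qCusp a b α z) ^ 2) u]
      rw [hpos.2, abs_of_neg hu]
  · -- u = 0
    subst hu
    constructor
    · simpa using (integrable_zero ℝ ℝ (volume : Measure ℝ)).congr
        (ae_of_all _ (fun y => by simp))
    · simp only [sub_zero, sub_self, abs_zero]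
      rw [Real.zero_rpow (by linarith : 2 * α + 1 ≠ 0)]
      simp
  · have hpos := pos_case a b α hα1 hα2 hu
    exact ⟨hpos.1, by rw [hpos.2, abs_of_pos hu]⟩
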